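/- Let n be a positive integer and let λ be a real number with λ > n²π², cos(√(λ−n²π²)) ≠ 0 and F(λ) = 0. Then every real number d such that F has derivative d at λ satisfies d < 0. In other words, all roots of the eigenvalue equation above n²π² are simple with F strictly decreasing through them. -/

import Mathlib

open Real

lemma my_hasDerivAt_tanh (x : ℝ) :
    HasDerivAt Real.tanh (1 / Real.cosh x ^ 2) x := by
  have h := (Real.hasDerivAt_sinh x).div (Real.hasDerivAt_cosh x) (Real.cosh_pos x).ne'
  have hfun : (fun y : ℝ => Real.sinh y / Real.cosh y) = Real.tanh := by
    funext y; rw [Real.tanh_eq_sinh_div_cosh]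
  rw [show (Real.sinh / Real.cosh : ℝ → ℝ) = Real.tanh from hfun] at h
  have : (Real.cosh x * Real.cosh x - Real.sinh x * Real.sinh x) / Real.cosh x ^ 2
      = 1 / Real.cosh x ^ 2 := by
    have := Real.cosh_sq_sub_sinh_sq x
    ring_nf
    nlinarith [Real.cosh_pos x]
  rwa [this] at h

/-- Let `n` be a positive integer and `λ > n²π²` with `cos(√(λ−n²π²)) ≠ 0` and `F(λ) = 0`,
where `F(μ) = tanh(√(μ+n²π²))/√(μ+n²π²) − tan(√(μ−n²π²))/√(μ−n²π²)`. Then every real `d`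
such that `F` has derivative `d` at `λ` satisfies `d < 0`: all roots of the eigenvalue
equation above `n²π²` are simple, with `F` strictly decreasing through them. -/
theorem stmt_4 (n : ℕ) (hn : 0 < n) (lam : ℝ) (hlam : lam > (n : ℝ)^2 * π^2)
    (hcos : Real.cos (Real.sqrt (lam - (n : ℝ)^2 * π^2)) ≠ 0)
    (hF : Real.tanh (Real.sqrt (lam + (n : ℝ)^2 * π^2)) / Real.sqrt (lam + (n : ℝ)^2 * π^2)
        - Real.tan (Real.sqrt (lam - (n : ℝ)^2 * π^2)) / Real.sqrt (lam - (n : ℝ)^2 * π^2) = 0) :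
    ∀ d : ℝ,
      HasDerivAt
        (fun l : ℝ =>
          Real.tanh (Real.sqrt (l + (n : ℝ)^2 * π^2)) / Real.sqrt (l + (n : ℝ)^2 * π^2)
            - Real.tan (Real.sqrt (l - (n : ℝ)^2 * π^2)) / Real.sqrt (l - (n : ℝ)^2 * π^2))
        d lam
      → d < 0 := by
  intro d hd
  set c : ℝ := (n : ℝ)^2 * π^2 with hc
  have hπ : (3 : ℝ) < π := Real.pi_gt_three
  have hn1 : (1 : ℝ) ≤ (n : ℝ) := by exact_mod_cast hn
  have hc1 : (1 : ℝ) < c := by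
    have h2 : (1:ℝ) < π^2 := by nlinarith
    have h1 : (1:ℝ) ≤ (n:ℝ)^2 := by nlinarith
    calc (1:ℝ) < π^2 := h2
      _ = 1 * π^2 := (one_mul _).symm
      _ ≤ (n:ℝ)^2 * π^2 := by
          exact mul_le_mul_of_nonneg_right h1 (by positivity)
  have hsub : 0 < lam - c := by linarith
  have hadd : 0 < lam + c := by linarith
  set a : ℝ := Real.sqrt (lam + c) with haa
  set b : ℝ := Real.sqrt (lam - c) with hbb
  have ha0 : 0 < a := Real.sqrt_pos.2 hadd
  have hb0 : 0 < b := Real.sqrt_pos.2 hsub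
  have ha1 : 1 < a := by
    rw [haa, show (1:ℝ) = Real.sqrt 1 from (Real.sqrt_one).symm]
    exact Real.sqrt_lt_sqrt one_pos.le (by linarith)
  -- derivative of the inner sqrt functions
  have hsa : HasDerivAt (fun l : ℝ => Real.sqrt (l + c)) (1 / (2 * a)) lam := by
    have h1 : HasDerivAt (fun l : ℝ => l + c) 1 lam := (hasDerivAt_id lam).add_const c
    have h2 : HasDerivAt (fun l : ℝ => Real.sqrt (l + c)) (1 / (2 * Real.sqrt (lam + c)) * 1) lam :=
      (Real.hasDerivAt_sqrt hadd.ne').comp (h := fun l : ℝ => l + c) lam h1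
    rwa [mul_one] at h2
  have hsb : HasDerivAt (fun l : ℝ => Real.sqrt (l - c)) (1 / (2 * b)) lam := by
    have h1 : HasDerivAt (fun l : ℝ => l - c) 1 lam := (hasDerivAt_id lam).sub_const c
    have h2 : HasDerivAt (fun l : ℝ => Real.sqrt (l - c)) (1 / (2 * Real.sqrt (lam - c)) * 1) lam :=
      (Real.hasDerivAt_sqrt hsub.ne').comp (h := fun l : ℝ => l - c) lam h1
    rwa [mul_one] at h2
  -- derivative of the two quotients
  have hT : HasDerivAt (fun l : ℝ => Real.tanh (Real.sqrt (l + c)))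
      (1 / Real.cosh a ^ 2 * (1 / (2 * a))) lam :=
    (my_hasDerivAt_tanh a).comp (h := fun l : ℝ => Real.sqrt (l + c)) lam hsa
  have hU : HasDerivAt (fun l : ℝ => Real.tan (Real.sqrt (l - c)))
      (1 / Real.cos b ^ 2 * (1 / (2 * b))) lam :=
    (Real.hasDerivAt_tan hcos).comp (h := fun l : ℝ => Real.sqrt (l - c)) lam hsb
  set d1 : ℝ := (1 / Real.cosh a ^ 2 * (1 / (2 * a)) * a - Real.tanh a * (1 / (2 * a))) / a ^ 2
    with hd1
  set d2 : ℝ := (1 / Real.cos b ^ 2 * (1 / (2 * b)) * b - Real.tan b * (1 / (2 * b))) / b ^ 2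
    with hd2
  have hD : HasDerivAt
      (fun l : ℝ => Real.tanh (Real.sqrt (l + c)) / Real.sqrt (l + c)
        - Real.tan (Real.sqrt (l - c)) / Real.sqrt (l - c)) (d1 - d2) lam :=
    (hT.div hsa ha0.ne').sub (hU.div hsb hb0.ne')
  have hdeq : d = d1 - d2 := hd.unique hD
  -- now prove d1 - d2 < 0
  have hcoshp : 0 < Real.cosh a := Real.cosh_pos a
  have hcosp : 0 < Real.cos b ^ 2 := pow_two_pos_of_ne_zero hcos
  have hcosh1 : 1 ≤ Real.cosh a := Real.one_le_cosh a
  have hsinhp : 0 < Real.sinh a := Real.sinh_pos_iff.2 ha0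
  have hselfsinh : a < Real.sinh a := Real.self_lt_sinh_iff.2 ha0
  have htanhsc : Real.tanh a = Real.sinh a / Real.cosh a := Real.tanh_eq_sinh_div_cosh a
  have htanh1 : Real.tanh a < 1 := by
    rw [htanhsc, div_lt_one hcoshp]
    nlinarith [Real.cosh_sub_sinh a, Real.exp_pos (-a)]
  have htanhpos : 0 < Real.tanh a := by
    rw [htanhsc]; exact div_pos hsinhp hcoshp
  -- key inequality 1 : a < tanh a * cosh a ^ 2
  have hk1 : a < Real.tanh a * Real.cosh a ^ 2 := by
    have : Real.tanh a * Real.cosh a ^ 2 = Real.sinh a * Real.cosh a := by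
      rw [htanhsc]; field_simp
    rw [this]; nlinarith
  have hd1neg : d1 < 0 := by
    have hnum : 1 / Real.cosh a ^ 2 * (1 / (2 * a)) * a - Real.tanh a * (1 / (2 * a))
        = (a - Real.tanh a * Real.cosh a ^ 2) / (2 * a * Real.cosh a ^ 2) := by
      field_simp
    rw [hd1, hnum]
    apply div_neg_of_neg_of_pos
    · apply div_neg_of_neg_of_pos (by linarith) (by positivity)
    · positivity
  -- from hF : tanh a * b = tan b * a
  have hab : Real.tanh a * b = Real.tan b * a := by
    have h' : Real.tanh a / a = Real.tan b / b := by linarith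
    field_simp at h'
    linarith
  have htanpos : 0 < Real.tan b := by
    by_contra hcon
    push_neg at hcon
    have h := mul_pos htanhpos hb0
    rw [hab] at h
    have : Real.tan b * a ≤ 0 := mul_nonpos_of_nonpos_of_nonneg hcon ha0.le
    linarith
  have htanlt : Real.tan b < b := by
    have h1 : Real.tan b * a < b := by
      rw [← hab]
      exact mul_lt_of_lt_one_left hb0 htanh1
    have h2 : Real.tan b < Real.tan b * a := lt_mul_of_one_lt_right htanpos ha1
    linarith
  have hcos1 : Real.cos b ^ 2 ≤ 1 := Real.cos_sq_le_one b
  have hk2 : Real.tan b * Real.cos b ^ 2 < b := by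
    have := mul_le_of_le_one_right htanpos.le hcos1
    linarith
  have hd2pos : 0 < d2 := by
    have hnum : 1 / Real.cos b ^ 2 * (1 / (2 * b)) * b - Real.tan b * (1 / (2 * b))
        = (b - Real.tan b * Real.cos b ^ 2) / (2 * b * Real.cos b ^ 2) := by
      field_simp
    rw [hd2, hnum]
    apply div_pos
    · apply div_pos (by linarith) (by positivity)
    · positivity
  rw [hdeq]; linarith
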